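/- Let U ⊆ ℂ^n be open with u_a ≠ u_b for every u ∈ U and all a ≠ b, and let A : U → M_n(ℂ) be differentiable with ∂_j A(u) = [ω_j(u,A(u)), A(u)] on U for every j = 1,…,n. Then the maps u ↦ ω_j(u,A(u)) are differentiable and satisfy the zero-curvature relations ∂_i ω_k(u,A(u)) − ∂_k ω_i(u,A(u)) = [ω_i(u,A(u)), ω_k(u,A(u))] on U for all i, k ∈ {1,…,n}. -/

import Mathlib

/-- `ω_j(u,A)`: the matrix whose `(a,b)` entry is `A_{ab}(δ_{aj} − δ_{bj})/(u_a − u_b)`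
for `a ≠ b`, and whose diagonal entries are `0`. -/
noncomputable def omegaMat {n : ℕ} (u : Fin n → ℂ) (A : Matrix (Fin n) (Fin n) ℂ)
    (j : Fin n) : Matrix (Fin n) (Fin n) ℂ :=
  Matrix.of fun a b =>
    if a = b then 0
    else A a b * ((if a = j then (1 : ℂ) else 0) - (if b = j then (1 : ℂ) else 0)) / (u a - u b)

/-- The complex partial derivative `∂_j f` in the `j`-th coordinate. -/
noncomputable def pd {n : ℕ} (j : Fin n) (f : (Fin n → ℂ) → ℂ) (u : Fin n → ℂ) : ℂ :=
  fderiv ℂ f u (Pi.single j 1)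

/-- Entrywise partial derivative `∂_j A` of a matrix-valued map. -/
noncomputable def mpd {n : ℕ} (j : Fin n) (A : (Fin n → ℂ) → Matrix (Fin n) (Fin n) ℂ)
    (u : Fin n → ℂ) : Matrix (Fin n) (Fin n) ℂ :=
  Matrix.of fun a b => pd j (fun v => A v a b) u

open ContinuousLinearMap in
lemma pd_div {n : ℕ} {f : (Fin n → ℂ) → ℂ} {u : Fin n → ℂ} (hf : DifferentiableAt ℂ f u)
    (a b i : Fin n) (hne : u a - u b ≠ 0) :
    pd i (fun v => f v / (v a - v b)) u =
      (pd i f u * (u a - u b) - f u * ((if a = i then (1:ℂ) else 0) - (if b = i then (1:ℂ) else 0)))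
        / (u a - u b) ^ 2 := by
  have hG : HasFDerivAt (fun v : Fin n → ℂ => v a - v b)
      ((proj a : (Fin n → ℂ) →L[ℂ] ℂ) - proj b) u :=
    ((proj a : (Fin n → ℂ) →L[ℂ] ℂ).hasFDerivAt.sub
      (proj b : (Fin n → ℂ) →L[ℂ] ℂ).hasFDerivAt)
  have hinv : HasFDerivAt (fun v : Fin n → ℂ => (v a - v b)⁻¹)
      ((-mulLeftRight ℂ ℂ (u a - u b)⁻¹ (u a - u b)⁻¹).comp
        ((proj a : (Fin n → ℂ) →L[ℂ] ℂ) - proj b)) u :=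
    (hasFDerivAt_inv' hne).comp u hG
  have hmul : HasFDerivAt (fun v => f v * (v a - v b)⁻¹) _ u := hf.hasFDerivAt.mul hinv
  have h1 : (fun v : Fin n → ℂ => f v / (v a - v b)) = fun v => f v * (v a - v b)⁻¹ := by
    funext v; rw [div_eq_mul_inv]
  rw [pd, h1, hmul.fderiv]
  simp only [ContinuousLinearMap.add_apply, ContinuousLinearMap.smul_apply,
    ContinuousLinearMap.comp_apply, ContinuousLinearMap.sub_apply, proj_apply,
    ContinuousLinearMap.neg_apply, mulLeftRight_apply, Pi.single_apply, smul_eq_mul]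
  rw [show fderiv ℂ f u (Pi.single i 1) = pd i f u from rfl]
  field_simp
  ring

lemma pd_const_mul {n : ℕ} {f : (Fin n → ℂ) → ℂ} {u : Fin n → ℂ}
    (hf : DifferentiableAt ℂ f u) (K : ℂ) (i : Fin n) :
    pd i (fun v => f v * K) u = pd i f u * K := by
  rw [pd, (hf.hasFDerivAt.mul_const K).fderiv]
  simp only [ContinuousLinearMap.smul_apply, smul_eq_mul]
  rw [show fderiv ℂ f u (Pi.single i 1) = pd i f u from rfl]
  ring

lemma key {n : ℕ} (u : Fin n → ℂ) (w : Matrix (Fin n) (Fin n) ℂ)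
    (hd : ∀ x y : Fin n, x ≠ y → u x ≠ u y) (i k a b : Fin n) (hab : a ≠ b) :
    ((omegaMat u w i * w - w * omegaMat u w i) a b
        * ((if a = k then (1:ℂ) else 0) - (if b = k then (1:ℂ) else 0))
      - (omegaMat u w k * w - w * omegaMat u w k) a b
        * ((if a = i then (1:ℂ) else 0) - (if b = i then (1:ℂ) else 0))) / (u a - u b)
    = (omegaMat u w i * omegaMat u w k) a b - (omegaMat u w k * omegaMat u w i) a b := by
  have hdab : u a - u b ≠ 0 := sub_ne_zero.mpr (hd a b hab)
  simp only [Matrix.sub_apply, Matrix.mul_apply]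
  rw [← Finset.sum_sub_distrib, ← Finset.sum_sub_distrib, ← Finset.sum_sub_distrib,
    Finset.sum_mul, Finset.sum_mul, ← Finset.sum_sub_distrib, Finset.sum_div]
  refine Finset.sum_congr rfl fun c _ => ?_
  by_cases hca : c = a
  · subst hca
    simp only [omegaMat, Matrix.of_apply, if_pos rfl, if_neg hab]
    ring
  · by_cases hcb : c = b
    · subst hcb
      simp only [omegaMat, Matrix.of_apply, if_pos rfl, if_neg hab]
      ring
    · have h1 : ¬ a = c := fun h => hca h.symm
      have h2 : ¬ c = b := hcb
      have hx : u a - u c ≠ 0 := sub_ne_zero.mpr (hd a c h1)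
      have hy : u c - u b ≠ 0 := sub_ne_zero.mpr (hd c b h2)
      simp only [omegaMat, Matrix.of_apply, if_neg h1, if_neg h2, if_neg hab]
      field_simp
      ring

/-- if `∂_j A = [ω_j(u,A), A]` on `U` for all `j`, then the maps
`u ↦ ω_j(u,A(u))` are differentiable on `U` and satisfy the zero-curvature relations
`∂_i ω_k − ∂_k ω_i = [ω_i, ω_k]` on `U`. -/
theorem stmt6 {n : ℕ} (U : Set (Fin n → ℂ)) (hUopen : IsOpen U)
    (hdist : ∀ u ∈ U, ∀ a b : Fin n, a ≠ b → u a ≠ u b)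
    (A : (Fin n → ℂ) → Matrix (Fin n) (Fin n) ℂ)
    (hdiff : ∀ a b : Fin n, DifferentiableOn ℂ (fun u => A u a b) U)
    (hA : ∀ u ∈ U, ∀ j : Fin n,
      mpd j A u = omegaMat u (A u) j * A u - A u * omegaMat u (A u) j) :
    (∀ j a b : Fin n, DifferentiableOn ℂ (fun u => omegaMat u (A u) j a b) U)
      ∧ (∀ u ∈ U, ∀ i k : Fin n,
          mpd i (fun v => omegaMat v (A v) k) u - mpd k (fun v => omegaMat v (A v) i) u
            = omegaMat u (A u) i * omegaMat u (A u) k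
              - omegaMat u (A u) k * omegaMat u (A u) i) := by
  constructor
  · intro j a b
    by_cases hab : a = b
    · simp only [omegaMat, Matrix.of_apply, if_pos hab]
      exact differentiableOn_const 0
    · simp only [omegaMat, Matrix.of_apply, if_neg hab]
      have hden : DifferentiableOn ℂ (fun u : Fin n → ℂ => u a - u b) U :=
        (((ContinuousLinearMap.proj a : (Fin n → ℂ) →L[ℂ] ℂ).differentiable.sub
          (ContinuousLinearMap.proj b : (Fin n → ℂ) →L[ℂ] ℂ).differentiable)).differentiableOn
      have : DifferentiableOn ℂ
          (fun u => (A u a b * ((if a = j then (1:ℂ) else 0) - if b = j then (1:ℂ) else 0))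
            * (u a - u b)⁻¹) U :=
        ((hdiff a b).mul_const _).mul
          (hden.inv fun u hu => sub_ne_zero.mpr (hdist u hu a b hab))
      simpa only [div_eq_mul_inv] using this
  · intro u hu i k
    ext a b
    simp only [Matrix.sub_apply, mpd, Matrix.of_apply]
    by_cases hab : a = b
    · subst hab
      have hz : ∀ m : Fin n, (fun v => omegaMat v (A v) m a a) = fun _ => (0:ℂ) := by
        intro m; funext v; simp [omegaMat]
      rw [hz i, hz k]
      simp only [pd, fderiv_fun_const]
      simp only [Pi.zero_apply, ContinuousLinearMap.zero_apply, sub_zero]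
      -- RHS diagonal is zero
      rw [Matrix.mul_apply, Matrix.mul_apply, ← Finset.sum_sub_distrib]
      symm
      refine Finset.sum_eq_zero fun c _ => ?_
      by_cases hca : a = c
      · subst hca; simp [omegaMat]
      · have hac : ¬ c = a := fun h => hca h.symm
        simp only [omegaMat, Matrix.of_apply, if_neg hca, if_neg hac]
        ring
    · have hne : u a - u b ≠ 0 := sub_ne_zero.mpr (hdist u hu a b hab)
      have hAd : DifferentiableAt ℂ (fun v => A v a b) u :=
        (hdiff a b).differentiableAt (hUopen.mem_nhds hu)
      have hfun : ∀ m : Fin n, (fun v => omegaMat v (A v) m a b)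
          = fun v => (A v a b * ((if a = m then (1:ℂ) else 0) - (if b = m then (1:ℂ) else 0)))
              / (v a - v b) := by
        intro m; funext v; simp [omegaMat, hab]
      rw [hfun i, hfun k, pd_div (hAd.mul_const _) a b i hne,
        pd_div (hAd.mul_const _) a b k hne, pd_const_mul hAd _ i, pd_const_mul hAd _ k]
      rw [show pd i (fun v => A v a b) u = mpd i A u a b from rfl,
        show pd k (fun v => A v a b) u = mpd k A u a b from rfl,
        hA u hu i, hA u hu k]
      rw [← key u (A u) (hdist u hu) i k a b hab]
      field_simp
      ring
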